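/- arXiv:1610.00843 — 4 statements merged into one kernel-verified Lean document; each statement's English description precedes it below -/
import Mathlib

section
/- Let M be a symmetric d×d matrix of rank k−1 and let E be its column span. Then for any w ∈ ℝ^d, ‖w‖ · dist(w, E) ≥ σ_k(M + w w^T), where σ_k denotes the k-th largest singular value. -/
open Matrix

/-- The `k`-th largest singular value of a symmetric real matrix: the `k`-th element
(1-indexed) of the absolute values of its eigenvalues sorted in decreasing order. -/
noncomputable def kthSingular {d : ℕ} (A : Matrix (Fin d) (Fin d) ℝ)
    (hA : A.IsHermitian) (k : ℕ) : ℝ :=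
  ((List.ofFn fun i => |hA.eigenvalues i|).insertionSort (· ≥ ·)).getD (k - 1) 0

open RealInnerProductSpace

lemma countP_ofFn_card {d : ℕ} (g : Fin d → ℝ) (p : ℝ → Prop) [DecidablePred p] :
    (List.ofFn g).countP (fun x => decide (p x)) =
      (Finset.univ.filter fun i => p (g i)).card := by
  rw [List.ofFn_eq_map, List.countP_map, Fin.univ_def]
  simp [Finset.filter, Finset.card, Multiset.filter_coe, List.countP_eq_length_filter,
    Function.comp_def]

lemma kth_card_ge {d k : ℕ} (hk : 0 < k) (hkd : k ≤ d) (g : Fin d → ℝ) :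
    k ≤ (Finset.univ.filter fun i =>
      ((List.ofFn g).insertionSort (· ≥ ·)).getD (k - 1) 0 ≤ g i).card := by
  classical
  set l := (List.ofFn g).insertionSort (· ≥ ·) with hl
  have hlen : l.length = d := by
    simp [hl, List.length_insertionSort]
  set s := l.getD (k - 1) 0 with hs
  rw [← countP_ofFn_card]
  have hperm : l.countP (fun x => decide (s ≤ x)) =
      (List.ofFn g).countP (fun x => decide (s ≤ x)) :=
    (List.perm_insertionSort _ _).countP_eq _
  rw [← hperm]
  have hsort : l.Pairwise (· ≥ ·) := List.pairwise_insertionSort _ _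
  have hkl : k - 1 < l.length := by omega
  have hsl : s = l.get ⟨k - 1, hkl⟩ := by
    rw [hs, List.getD_eq_getElem l 0 hkl]; rfl
  have htake : ∀ x ∈ l.take k, s ≤ x := by
    intro x hx
    obtain ⟨j, hj, hx⟩ := List.mem_take_iff_getElem.1 hx
    subst hx
    rcases lt_or_eq_of_le (Nat.le_sub_one_of_lt (lt_min_iff.1 hj).1 : j ≤ k - 1) with h | h
    · have := List.pairwise_iff_getElem.1 hsort j (k-1) (by omega) hkl h
      rw [hsl]; exact this
    · rw [hsl]; simp [h]
  calc k = (l.take k).length := by rw [List.length_take]; omega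
  _ = (l.take k).countP (fun x => decide (s ≤ x)) := by
        refine (List.countP_eq_length.2 ?_).symm
        intro a ha; simpa using htake a ha
  _ ≤ l.countP (fun x => decide (s ≤ x)) := by
        conv_rhs => rw [← List.take_append_drop k l]
        rw [List.countP_append]; omega

set_option maxHeartbeats 1000000 in
/-- If `M` is symmetric of rank `k-1` with column span `E`, then for any `w`,
`‖w‖ · dist(w, E) ≥ σ_k (M + w wᵀ)`. -/
theorem stmt3 {d k : ℕ} (hk : 0 < k) (M : Matrix (Fin d) (Fin d) ℝ)
    (hM : M.IsHermitian) (hrank : M.rank = k - 1)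
    (w : EuclideanSpace ℝ (Fin d))
    (hZ : (M + Matrix.vecMulVec (WithLp.equiv 2 _ w) (WithLp.equiv 2 _ w)).IsHermitian) :
    kthSingular _ hZ k ≤
      ‖w‖ * Metric.infDist w (↑(LinearMap.range (Matrix.toEuclideanLin M)) : Set _) := by
  classical
  set Z := M + Matrix.vecMulVec (WithLp.equiv 2 _ w) (WithLp.equiv 2 _ w) with hZdef
  set E := LinearMap.range (Matrix.toEuclideanLin M) with hEdef
  have hEne : (↑E : Set (EuclideanSpace ℝ (Fin d))).Nonempty := ⟨0, E.zero_mem⟩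
  have hRHSnn : 0 ≤ ‖w‖ * Metric.infDist w (↑E : Set _) :=
    mul_nonneg (norm_nonneg _) Metric.infDist_nonneg
  by_cases hkd : d < k
  · have h0 : kthSingular Z hZ k = 0 := by
      unfold kthSingular
      apply List.getD_eq_default
      rw [List.length_insertionSort, List.length_ofFn]; omega
    rw [h0]; exact hRHSnn
  push_neg at hkd
  set lam := hZ.eigenvalues with hlam
  set b := hZ.eigenvectorBasis with hb
  set s := kthSingular Z hZ k with hsdef
  -- s is nonneg
  have hsnn : 0 ≤ s := by
    have hlen : ((List.ofFn fun i => |lam i|).insertionSort (· ≥ ·)).length = d := by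
      rw [List.length_insertionSort, List.length_ofFn]
    have hkl : k - 1 < ((List.ofFn fun i => |lam i|).insertionSort (· ≥ ·)).length := by omega
    have hmem : s ∈ (List.ofFn fun i => |lam i|).insertionSort (· ≥ ·) := by
      rw [hsdef]; unfold kthSingular
      rw [List.getD_eq_getElem _ 0 hkl]
      exact List.getElem_mem _
    have := (List.perm_insertionSort (· ≥ ·) (List.ofFn fun i => |lam i|)).mem_iff.1 hmem
    obtain ⟨j, hj⟩ := Set.mem_range.1 ((List.mem_ofFn' _ _).1 this)
    rw [← hj]; exact abs_nonneg _
  have hcard : k ≤ (Finset.univ.filter fun i => s ≤ |lam i|).card := by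
    have := kth_card_ge hk hkd (fun i => |lam i|)
    simpa [hsdef, kthSingular] using this
  set I := Finset.univ.filter fun i => s ≤ |lam i| with hI
  set T := Submodule.span ℝ (Set.range fun i : I => b i) with hT
  have hbON : Orthonormal ℝ (fun i : I => b i) :=
    b.orthonormal.comp _ Subtype.val_injective
  have hTrank : k ≤ Module.finrank ℝ T := by
    rw [hT, finrank_span_eq_card hbON.linearIndependent]
    simpa using hcard
  have hErank : Module.finrank ℝ E = k - 1 := by
    rw [hEdef, toEuclideanLin_eq_toLin, ← M.rank_eq_finrank_range_toLin
      (PiLp.basisFun 2 ℝ (Fin d)) (PiLp.basisFun 2 ℝ (Fin d)), hrank]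
  have hdim : Module.finrank ℝ (EuclideanSpace ℝ (Fin d)) = d := finrank_euclideanSpace_fin
  have hFrank : Module.finrank ℝ (Eᗮ) = d - (k-1) := by
    have h1 := Submodule.finrank_add_finrank_orthogonal E
    rw [hErank, hdim] at h1; omega
  have hpos : 0 < Module.finrank ℝ ((T ⊓ Eᗮ : Submodule ℝ (EuclideanSpace ℝ (Fin d)))) := by
    have h1 := Submodule.finrank_sup_add_finrank_inf_eq T Eᗮ
    have h2 : Module.finrank ℝ ((T ⊔ Eᗮ : Submodule ℝ (EuclideanSpace ℝ (Fin d)))) ≤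
        Module.finrank ℝ (EuclideanSpace ℝ (Fin d)) := Submodule.finrank_le _
    rw [hdim] at h2
    omega
  obtain ⟨x, hx0⟩ := Module.finrank_pos_iff_exists_ne_zero.mp hpos
  obtain ⟨hxT, hxF⟩ := x.2
  set x' := (x : EuclideanSpace ℝ (Fin d)) with hx'
  have hxne : x' ≠ 0 := fun h => hx0 (Subtype.ext h)
  have hxnorm : 0 < ‖x'‖ := norm_pos_iff.2 hxne
  have hfM : (Matrix.toEuclideanLin M).IsSymmetric := isHermitian_iff_isSymmetric.1 hM
  have hfZ : (Matrix.toEuclideanLin Z).IsSymmetric := isHermitian_iff_isSymmetric.1 hZ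
  -- M kills x'
  have hMx : Matrix.toEuclideanLin M x' = 0 := by
    have h0 : ∀ y, ⟪y, Matrix.toEuclideanLin M x'⟫ = 0 := by
      intro y
      rw [← hfM y x']
      exact hxF _ (LinearMap.mem_range_self _ y)
    exact inner_self_eq_zero.1 (h0 _)
  -- Z acts as rank-one on x'
  have hfx : Matrix.toEuclideanLin Z x' = (⟪w, x'⟫) • w := by
    have hadd : Matrix.toEuclideanLin Z x' = Matrix.toEuclideanLin M x'
        + Matrix.toEuclideanLin (Matrix.vecMulVec (WithLp.equiv 2 _ w) (WithLp.equiv 2 _ w)) x' := by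
      rw [hZdef, map_add]; rfl
    rw [hadd, hMx, zero_add]
    ext i
    simp only [Matrix.toEuclideanLin_apply, Matrix.mulVec, Matrix.vecMulVec_apply,
      dotProduct, PiLp.inner_apply, RCLike.inner_apply, conj_trivial, Finset.mul_sum,
      PiLp.smul_apply, smul_eq_mul, WithLp.equiv_apply, WithLp.equiv_symm_apply]
    rw [Finset.sum_mul]
    exact Finset.sum_congr rfl fun j _ => by ring
  -- coefficients
  have hcoef : ∀ i : Fin d, i ∉ I → ⟪(b i : EuclideanSpace ℝ (Fin d)), x'⟫ = 0 := by
    intro i hi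
    have hle : T ≤ (ℝ ∙ (b i))ᗮ := by
      rw [hT, Submodule.span_le]
      rintro _ ⟨⟨j, hj⟩, rfl⟩
      rw [SetLike.mem_coe, Submodule.mem_orthogonal_singleton_iff_inner_right]
      exact b.orthonormal.2 (fun h => hi (h ▸ hj))
    exact Submodule.mem_orthogonal_singleton_iff_inner_right.1 (hle hxT)
  have hfb : ∀ i, Matrix.toEuclideanLin Z (b i) = lam i • b i := by
    intro i
    have h := hZ.mulVec_eigenvectorBasis i
    ext j
    have := congrFun h j
    simpa [Matrix.toEuclideanLin_apply] using this
  set c : Fin d → ℝ := fun i => ⟪(b i : EuclideanSpace ℝ (Fin d)), x'⟫ with hc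
  have hxsq : ‖x'‖^2 = ∑ i, (c i)^2 := by
    have := b.sum_inner_mul_inner x' x'
    rw [real_inner_self_eq_norm_sq] at this
    rw [← this]
    apply Finset.sum_congr rfl
    intro i _
    have h3 : (inner ℝ x' (b i) : ℝ) = c i := real_inner_comm _ _
    have h4 : (inner ℝ (b i) x' : ℝ) = c i := rfl
    rw [h3, h4]; ring
  have hfsq : ‖Matrix.toEuclideanLin Z x'‖^2 = ∑ i, (lam i * c i)^2 := by
    have h1 := b.sum_inner_mul_inner (Matrix.toEuclideanLin Z x') (Matrix.toEuclideanLin Z x')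
    rw [real_inner_self_eq_norm_sq] at h1
    rw [← h1]
    apply Finset.sum_congr rfl
    intro i _
    have h2 : ⟪(b i : EuclideanSpace ℝ (Fin d)), Matrix.toEuclideanLin Z x'⟫ = lam i * c i := by
      rw [← hfZ (b i) x', hfb i, inner_smul_left]
      simp [hc]
    have h4 : ⟪Matrix.toEuclideanLin Z x', (b i : EuclideanSpace ℝ (Fin d))⟫ = lam i * c i :=
      (real_inner_comm _ _).trans h2
    rw [h4, h2]; ring
  have key : s^2 * ‖x'‖^2 ≤ ‖Matrix.toEuclideanLin Z x'‖^2 := by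
    rw [hxsq, hfsq, Finset.mul_sum]
    apply Finset.sum_le_sum
    intro i _
    by_cases hi : i ∈ I
    · have h1 : s ≤ |lam i| := (Finset.mem_filter.1 hi).2
      have h2 : s^2 ≤ lam i^2 := by
        have := pow_le_pow_left₀ hsnn h1 2
        rwa [sq_abs] at this
      rw [mul_pow]
      exact mul_le_mul_of_nonneg_right h2 (sq_nonneg _)
    · have : c i = 0 := hcoef i hi
      rw [this]; simp
  have key2 : s * ‖x'‖ ≤ ‖Matrix.toEuclideanLin Z x'‖ := by
    have hnn : 0 ≤ s * ‖x'‖ := mul_nonneg hsnn (norm_nonneg _)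
    have h5 : (s * ‖x'‖)^2 ≤ ‖Matrix.toEuclideanLin Z x'‖^2 := by rw [mul_pow]; exact key
    exact le_of_pow_le_pow_left₀ two_ne_zero (norm_nonneg _) h5
  -- bound the rank one action
  set u := (E.orthogonalProjectionOnto w : EuclideanSpace ℝ (Fin d)) with hu
  have hinner : ⟪w, x'⟫ = ⟪w - u, x'⟫ := by
    have h0 : ⟪u, x'⟫ = 0 := hxF u (E.orthogonalProjectionOnto w).2
    rw [inner_sub_left, h0, sub_zero]
  have hbound : ‖Matrix.toEuclideanLin Z x'‖ ≤ (‖w - u‖ * ‖x'‖) * ‖w‖ := by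
    rw [hfx, norm_smul, Real.norm_eq_abs, hinner]
    exact mul_le_mul_of_nonneg_right (abs_real_inner_le_norm (w - u) x') (norm_nonneg w)
  have hvdist : ‖w - u‖ ≤ Metric.infDist w (↑E : Set _) := by
    by_contra hcon
    push_neg at hcon
    obtain ⟨y, hy, hlt⟩ := (Metric.infDist_lt_iff hEne).1 hcon
    have hmin : ‖w - u‖ ≤ dist w y := by
      rw [dist_eq_norm, hu, ← Submodule.starProjection_apply, Submodule.starProjection_minimal]
      have hbdd : BddBelow (Set.range fun v : E => ‖w - (v : EuclideanSpace ℝ (Fin d))‖) :=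
        ⟨0, by rintro z ⟨t, rfl⟩; exact norm_nonneg _⟩
      exact ciInf_le hbdd ⟨y, hy⟩
    linarith
  have final : s * ‖x'‖ ≤ (‖w‖ * Metric.infDist w (↑E : Set _)) * ‖x'‖ := by
    refine key2.trans (hbound.trans ?_)
    calc (‖w - u‖ * ‖x'‖) * ‖w‖ = (‖w - u‖ * ‖w‖) * ‖x'‖ := by ring
    _ ≤ (Metric.infDist w (↑E : Set _) * ‖w‖) * ‖x'‖ :=
        mul_le_mul_of_nonneg_right (mul_le_mul_of_nonneg_right hvdist (norm_nonneg w))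
          (norm_nonneg x')
    _ = (‖w‖ * Metric.infDist w (↑E : Set _)) * ‖x'‖ := by ring
  exact le_of_mul_le_mul_right final hxnorm
end

section
/- Let E and F be subspaces of ℝ^n with ‖P_{E^⊥} P_F‖ ≤ δ (operator norm). Then for every v ∈ ℝ^n, ‖P_F v‖² ≤ ‖P_E v‖² + 3δ‖v‖². -/
/-- The orthogonal projection onto a submodule `K`, as a map of the ambient space. -/
noncomputable def projC {n : ℕ} (K : Submodule ℝ (EuclideanSpace ℝ (Fin n))) :
    EuclideanSpace ℝ (Fin n) →L[ℝ] EuclideanSpace ℝ (Fin n) :=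
  K.subtypeL.comp (K.orthogonalProjectionOnto)

lemma projC_self_adjoint {n : ℕ} (K : Submodule ℝ (EuclideanSpace ℝ (Fin n)))
    (x y : EuclideanSpace ℝ (Fin n)) :
    inner ℝ (projC K x) y = (inner ℝ x (projC K y) : ℝ) := by
  simpa [projC] using Submodule.inner_starProjection_left_eq_right K x y

lemma projC_idem {n : ℕ} (K : Submodule ℝ (EuclideanSpace ℝ (Fin n)))
    (x : EuclideanSpace ℝ (Fin n)) : projC K (projC K x) = projC K x := by
  simp [projC, Submodule.orthogonalProjectionOnto_mem_subspace_eq_self, Submodule.starProjection_eq_self_iff]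

/-- If `‖P_{Eᗮ} P_F‖ ≤ δ` then `‖P_F v‖² ≤ ‖P_E v‖² + 3 δ ‖v‖²` for every `v`. -/
theorem stmt5 {n : ℕ} (E F : Submodule ℝ (EuclideanSpace ℝ (Fin n))) (δ : ℝ)
    (h : ‖(projC Eᗮ).comp (projC F)‖ ≤ δ) (v : EuclideanSpace ℝ (Fin n)) :
    ‖projC F v‖ ^ 2 ≤ ‖projC E v‖ ^ 2 + 3 * δ * ‖v‖ ^ 2 := by
  set w := projC F v with hw
  have hδ0 : 0 ≤ δ := le_trans (norm_nonneg _) h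
  -- ‖w‖² = ⟪w, v⟫
  have h1 : ‖w‖ ^ 2 = inner ℝ w v := by
    have : (inner ℝ w w : ℝ) = inner ℝ w v := by
      calc (inner ℝ w w : ℝ) = inner ℝ v (projC F w) := projC_self_adjoint F v w
          _ = inner ℝ v w := by rw [hw, projC_idem]
          _ = inner ℝ w v := real_inner_comm _ _
    rw [← this, real_inner_self_eq_norm_sq]
  -- decomposition of v
  have hdec : v = projC E v + projC Eᗮ v := by
    simpa [projC] using (Submodule.starProjection_add_starProjection_orthogonal E v).symm
  have h2 : (inner ℝ w v : ℝ) = inner ℝ w (projC E v) + inner ℝ w (projC Eᗮ v) := by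
    conv_lhs => rw [hdec]
    exact inner_add_right _ _ _
  -- bound the cross term
  have h3 : (inner ℝ w (projC Eᗮ v) : ℝ) ≤ δ * ‖v‖ ^ 2 := by
    have : (inner ℝ w (projC Eᗮ v) : ℝ) = inner ℝ (projC Eᗮ w) v :=
      (projC_self_adjoint Eᗮ w v).symm
    rw [this]
    have hb : ‖projC Eᗮ w‖ ≤ δ * ‖v‖ := by
      have := ((projC Eᗮ).comp (projC F)).le_opNorm v
      have h' : ‖(projC Eᗮ).comp (projC F)‖ * ‖v‖ ≤ δ * ‖v‖ :=
        mul_le_mul_of_nonneg_right h (norm_nonneg _)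
      simpa [hw] using le_trans this h'
    calc (inner ℝ (projC Eᗮ w) v : ℝ) ≤ ‖projC Eᗮ w‖ * ‖v‖ := real_inner_le_norm _ _
      _ ≤ δ * ‖v‖ * ‖v‖ := mul_le_mul_of_nonneg_right hb (norm_nonneg _)
      _ = δ * ‖v‖ ^ 2 := by ring
  have h4 : (inner ℝ w (projC E v) : ℝ) ≤ ‖w‖ * ‖projC E v‖ := real_inner_le_norm _ _
  nlinarith [sq_nonneg (‖w‖ - ‖projC E v‖), sq_nonneg ‖v‖, norm_nonneg w, norm_nonneg (projC E v)]
end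

section
/- Let μ_1, ..., μ_k ∈ ℝ^d be linearly independent, α_i > 0, and let v ∈ ℝ^d satisfy ⟨μ_1, v⟩ > ⟨μ_i, v⟩ for all i ≠ 1. Define Z_λ = Σ_i α_i (1 − λ⟨μ_i, v⟩) μ_i μ_i^T. If ⟨μ_1, v⟩ > 0, then λ* = 1/⟨μ_1, v⟩ is the largest λ such that Z_λ is positive semi-definite. -/
open Matrix

lemma sum_comm3 {A B C : Type*} [Fintype A] [Fintype B] [Fintype C]
    (f : A → B → C → ℝ) : (∑ a, ∑ b, ∑ i, f a b i) = ∑ i, ∑ a, ∑ b, f a b i := by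
  have h1 : ∀ a, ∑ b, ∑ i, f a b i = ∑ i, ∑ b, f a b i := fun a => Finset.sum_comm
  simp_rw [h1]
  exact Finset.sum_comm

lemma quad_form {n d : ℕ} (c : Fin n → ℝ) (μ : Fin n → Fin d → ℝ) (x : Fin d → ℝ) :
    x ⬝ᵥ ((∑ i, c i • Matrix.vecMulVec (μ i) (μ i)) *ᵥ x) = ∑ i, c i * (μ i ⬝ᵥ x) ^ 2 := by
  simp only [Matrix.mulVec, dotProduct, Matrix.sum_apply, Matrix.smul_apply,
    Matrix.vecMulVec_apply, smul_eq_mul, Finset.sum_mul, Finset.mul_sum, pow_two]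
  rw [sum_comm3]
  refine Finset.sum_congr rfl fun i _ => Finset.sum_congr rfl fun a _ =>
    Finset.sum_congr rfl fun b _ => by ring

lemma herm {n d : ℕ} (c : Fin n → ℝ) (μ : Fin n → Fin d → ℝ) :
    (∑ i, c i • Matrix.vecMulVec (μ i) (μ i)).IsHermitian := by
  unfold Matrix.IsHermitian
  ext j l
  simp only [conjTranspose_apply, Matrix.sum_apply, Matrix.smul_apply,
    Matrix.vecMulVec_apply, smul_eq_mul, star_trivial]
  exact Finset.sum_congr rfl fun i _ => by ring

/-- With `Z λ = ∑ i α i (1 - λ ⟨μ i, v⟩) μ i μ iᵀ`, linearly independent `μ`, positive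
weights, `⟨μ 0, v⟩ > ⟨μ i, v⟩` for `i ≠ 0` and `⟨μ 0, v⟩ > 0`, the value
`λ* = 1/⟨μ 0, v⟩` is the largest `λ` for which `Z λ` is positive semi-definite. -/
theorem stmt6 {d k : ℕ} (μ : Fin (k + 1) → Fin d → ℝ) (hμ : LinearIndependent ℝ μ)
    (α : Fin (k + 1) → ℝ) (hα : ∀ i, 0 < α i) (v : Fin d → ℝ)
    (hv : ∀ i, i ≠ 0 → μ i ⬝ᵥ v < μ 0 ⬝ᵥ v) (h0 : 0 < μ 0 ⬝ᵥ v) :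
    IsGreatest {lam : ℝ |
        (∑ i, (α i * (1 - lam * (μ i ⬝ᵥ v))) • Matrix.vecMulVec (μ i) (μ i)).PosSemidef}
      (μ 0 ⬝ᵥ v)⁻¹ := by
  set c0 := μ 0 ⬝ᵥ v with hc0
  constructor
  · -- membership: Z at λ* is PSD
    refine PosSemidef.of_dotProduct_mulVec_nonneg (herm _ _) fun x => ?_
    rw [star_trivial, quad_form]
    refine Finset.sum_nonneg fun i _ => ?_
    have hcoef : 0 ≤ 1 - c0⁻¹ * (μ i ⬝ᵥ v) := by
      have hle : μ i ⬝ᵥ v ≤ c0 := by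
        by_cases hi : i = 0
        · subst hi; exact le_rfl
        · exact (hv i hi).le
      have : c0⁻¹ * (μ i ⬝ᵥ v) ≤ c0⁻¹ * c0 :=
        mul_le_mul_of_nonneg_left hle (inv_nonneg.mpr h0.le)
      rw [inv_mul_cancel₀ h0.ne'] at this
      linarith
    have := (hα i).le
    positivity
  · -- upper bound
    intro lam hlam
    -- construct a dual vector w with μ i ⬝ᵥ w = if i = 0 then 1 else 0
    set p := Submodule.span ℝ (Set.range μ) with hp
    let b : Module.Basis (Fin (k + 1)) ℝ p := Module.Basis.span hμ
    obtain ⟨g, hg⟩ := (b.coord 0).exists_extend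
    set w : Fin d → ℝ := fun j => g (Pi.single j 1) with hw
    have hgw : ∀ x : Fin d → ℝ, g x = x ⬝ᵥ w := by
      intro x
      have hx : x = ∑ j, x j • (Pi.single j 1 : Fin d → ℝ) := by
        funext l
        simp [Pi.single_apply, Finset.sum_ite_eq', mul_ite]
      conv_lhs => rw [hx]
      rw [map_sum]
      simp only [_root_.map_smul, smul_eq_mul]
      simp [dotProduct, hw]
    have hdual : ∀ i, μ i ⬝ᵥ w = if i = 0 then 1 else 0 := by
      intro i
      have hmem : μ i ∈ p := Submodule.subset_span ⟨i, rfl⟩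
      have hbi : (b i : Fin d → ℝ) = μ i := congrArg Subtype.val (Module.Basis.span_apply hμ i)
      have h1 : μ i ⬝ᵥ w = g (p.subtype (b i)) := by
        rw [← hgw]
        congr 1
        simpa using hbi.symm
      rw [h1, ← LinearMap.comp_apply, hg, Module.Basis.coord_apply, Module.Basis.repr_self]
      simp [Finsupp.single_apply, eq_comm]
    -- evaluate the quadratic form at w
    have hq := hlam.dotProduct_mulVec_nonneg w
    rw [star_trivial, quad_form] at hq
    have hsum : ∑ i, α i * (1 - lam * (μ i ⬝ᵥ v)) * (μ i ⬝ᵥ w) ^ 2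
        = α 0 * (1 - lam * c0) := by
      rw [Finset.sum_eq_single 0]
      · rw [hdual 0]; simp [← hc0]
      · intro i _ hi
        rw [hdual i]; simp [hi]
      · simp
    rw [hsum] at hq
    have h1 : 0 ≤ 1 - lam * c0 := by
      by_contra hcon
      push_neg at hcon
      nlinarith [hα 0]
    rw [inv_eq_one_div]
    rw [le_div_iff₀ h0]
    linarith
end

section
/- Let A and Â be symmetric positive semi-definite d×d matrices with ‖A − Â‖ ≤ ε < σ_k(A)/4, where A has rank exactly k (so σ_{k+1}(A) = 0). Let V, V̂ ∈ ℝ^{d×k} have orthonormal columns spanning the top-k eigenspaces of A and Â respectively. Then for every u ∈ ℝ^k, √(1 − 16ε²/σ_k(A)²)·‖u‖ ≤ ‖V̂^T V u‖ ≤ ‖u‖. -/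
open Matrix

noncomputable def nE {n : ℕ} (x : Fin n → ℝ) : ℝ := ‖(WithLp.equiv 2 (Fin n → ℝ)).symm x‖

lemma nE_nonneg {n : ℕ} (x : Fin n → ℝ) : 0 ≤ nE x := norm_nonneg _

lemma inner_eq_dot {n : ℕ} (x y : Fin n → ℝ) :
    (inner ℝ ((WithLp.equiv 2 (Fin n → ℝ)).symm x) ((WithLp.equiv 2 (Fin n → ℝ)).symm y) : ℝ)
      = x ⬝ᵥ y := by
  simp [PiLp.inner_apply, dotProduct, WithLp.equiv_symm_apply, mul_comm]

lemma nE_sq {n : ℕ} (x : Fin n → ℝ) : nE x ^ 2 = x ⬝ᵥ x := by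
  rw [← inner_eq_dot, real_inner_self_eq_norm_sq]; rfl

lemma sqrt_dot {n : ℕ} (x : Fin n → ℝ) : Real.sqrt (x ⬝ᵥ x) = nE x := by
  rw [← nE_sq, Real.sqrt_sq (nE_nonneg x)]

lemma dot_le_nE {n : ℕ} (x y : Fin n → ℝ) : x ⬝ᵥ y ≤ nE x * nE y := by
  rw [← inner_eq_dot]; exact real_inner_le_norm _ _

lemma nE_add_le {n : ℕ} (x y : Fin n → ℝ) : nE (x + y) ≤ nE x + nE y := by
  unfold nE
  rw [show (WithLp.equiv 2 (Fin n → ℝ)).symm (x + y)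
      = (WithLp.equiv 2 (Fin n → ℝ)).symm x + (WithLp.equiv 2 (Fin n → ℝ)).symm y from rfl]
  exact norm_add_le _ _

lemma nE_neg {n : ℕ} (x : Fin n → ℝ) : nE (-x) = nE x := by
  unfold nE
  rw [show (WithLp.equiv 2 (Fin n → ℝ)).symm (-x) = -(WithLp.equiv 2 (Fin n → ℝ)).symm x from rfl]
  exact norm_neg _

lemma dot_self_nonneg' {n : ℕ} (x : Fin n → ℝ) : 0 ≤ x ⬝ᵥ x := by
  rw [← nE_sq]; positivity

lemma dot_self_pos {n : ℕ} {x : Fin n → ℝ} (hx : x ≠ 0) : 0 < x ⬝ᵥ x := by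
  obtain ⟨i, hi⟩ : ∃ i, x i ≠ 0 := by
    by_contra h; push_neg at h; exact hx (funext h)
  exact Finset.sum_pos' (fun j _ => mul_self_nonneg _)
    ⟨i, Finset.mem_univ i, mul_self_pos.mpr hi⟩

lemma nE_le_of_dot {n m : ℕ} {x : Fin n → ℝ} {y : Fin m → ℝ} (h : x ⬝ᵥ x ≤ y ⬝ᵥ y) :
    nE x ≤ nE y := by
  rw [← sqrt_dot, ← sqrt_dot]; exact Real.sqrt_le_sqrt h

lemma spec_bound {d : ℕ} {M : Matrix (Fin d) (Fin d) ℝ} {ε : ℝ}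
    (h : ‖Matrix.toEuclideanCLM (𝕜 := ℝ) M‖ ≤ ε)
    (x : Fin d → ℝ) : nE (M *ᵥ x) ≤ ε * nE x := by
  have h2 := (Matrix.toEuclideanCLM (𝕜 := ℝ) M).le_opNorm ((WithLp.equiv 2 (Fin d → ℝ)).symm x)
  rw [WithLp.equiv_symm_apply, Matrix.toEuclideanCLM_toLp] at h2
  have h3 : ‖Matrix.toEuclideanCLM (𝕜 := ℝ) M‖ * ‖(WithLp.equiv 2 (Fin d → ℝ)).symm x‖
      ≤ ε * nE x := mul_le_mul_of_nonneg_right h (norm_nonneg _)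
  refine le_trans ?_ (le_trans h2 h3)
  simp [nE, Matrix.toLin'_apply, WithLp.equiv_symm_apply]

section helpers
variable {m n : ℕ}

lemma mulVec_dot_left (M : Matrix (Fin m) (Fin n) ℝ) (x : Fin n → ℝ) (y : Fin m → ℝ) :
    (M *ᵥ x) ⬝ᵥ y = x ⬝ᵥ (Mᵀ *ᵥ y) := by
  rw [dotProduct_comm, dotProduct_mulVec, ← mulVec_transpose, dotProduct_comm]

lemma dot_mulVec_right (M : Matrix (Fin m) (Fin n) ℝ) (x : Fin m → ℝ) (y : Fin n → ℝ) :
    x ⬝ᵥ (M *ᵥ y) = (Mᵀ *ᵥ x) ⬝ᵥ y := by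
  rw [dotProduct_mulVec, ← mulVec_transpose, dotProduct_comm]

lemma orth_dot {W : Matrix (Fin m) (Fin n) ℝ} (hW : Wᵀ * W = 1) (a b : Fin n → ℝ) :
    (W *ᵥ a) ⬝ᵥ (W *ᵥ b) = a ⬝ᵥ b := by
  rw [mulVec_dot_left, mulVec_mulVec, hW, one_mulVec]

lemma psd_symm {M : Matrix (Fin m) (Fin m) ℝ} (h : M.PosSemidef) : Mᵀ = M := by
  have := h.1
  rwa [Matrix.IsHermitian, conjTranspose_eq_transpose_of_trivial] at this
end helpers

lemma rayleigh {d k : ℕ} {ε : ℝ} {A Ahat : Matrix (Fin d) (Fin d) ℝ}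
    (hAhat : Ahat.PosSemidef) (hrank : A.rank = k)
    {Vhat : Matrix (Fin d) (Fin k) ℝ} {dhat : Fin k → ℝ}
    (hVhat : Vhatᵀ * Vhat = 1) (heig : Ahat * Vhat = Vhat * Matrix.diagonal dhat)
    (htop : ∀ x : Fin d → ℝ, Vhatᵀ.mulVec x = 0 → ∀ j, x ⬝ᵥ Ahat.mulVec x ≤ dhat j * (x ⬝ᵥ x))
    (hclose : ‖Matrix.toEuclideanCLM (𝕜 := ℝ) (A - Ahat)‖ ≤ ε)
    (z : Fin d → ℝ) (hz : Vhatᵀ *ᵥ z = 0) : z ⬝ᵥ Ahat *ᵥ z ≤ ε * (z ⬝ᵥ z) := by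
  by_contra hcon
  push_neg at hcon
  have hz0 : z ≠ 0 := by
    rintro rfl
    simp at hcon
  have hs : 0 < z ⬝ᵥ z := dot_self_pos hz0
  set R := z ⬝ᵥ Ahat *ᵥ z with hR
  set S := z ⬝ᵥ z with hS
  have hdj : ∀ j, z ⬝ᵥ Ahat *ᵥ z ≤ dhat j * (z ⬝ᵥ z) := htop z hz
  have hsymm : Ahatᵀ = Ahat := psd_symm hAhat
  have hVA : Vhatᵀ * Ahat = Matrix.diagonal dhat * Vhatᵀ := by
    calc Vhatᵀ * Ahat = (Ahat * Vhat)ᵀ := by rw [transpose_mul, hsymm]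
    _ = (Vhat * Matrix.diagonal dhat)ᵀ := by rw [heig]
    _ = Matrix.diagonal dhat * Vhatᵀ := by rw [transpose_mul, Matrix.diagonal_transpose]
  have hVAz : Vhatᵀ *ᵥ (Ahat *ᵥ z) = 0 := by
    rw [mulVec_mulVec, hVA, ← mulVec_mulVec, hz, mulVec_zero]
  set L : ((Fin k → ℝ) × ℝ) →ₗ[ℝ] (Fin d → ℝ) :=
    LinearMap.coprod (Vhat.mulVecLin) (LinearMap.toSpanSingleton ℝ _ z) with hL
  have hLapp : ∀ c : Fin k → ℝ, ∀ t : ℝ, L (c, t) = Vhat *ᵥ c + t • z := fun c t => rfl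
  have hinj : Function.Injective L := by
    rw [← LinearMap.ker_eq_bot, LinearMap.ker_eq_bot']
    rintro ⟨c, t⟩ hct
    rw [hLapp] at hct
    have h1 : Vhatᵀ *ᵥ (Vhat *ᵥ c + t • z) = 0 := by rw [hct, mulVec_zero]
    rw [mulVec_add, mulVec_mulVec, hVhat, one_mulVec, mulVec_smul, hz, smul_zero,
      add_zero] at h1
    rw [h1, mulVec_zero, zero_add] at hct
    rcases smul_eq_zero.mp hct with h | h
    · exact Prod.ext (by simp [h1]) (by simp [h])
    · exact absurd h hz0
  have hrangeL : Module.finrank ℝ (LinearMap.range L) = k + 1 := by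
    rw [LinearMap.finrank_range_of_inj hinj]
    simp
  set K := LinearMap.ker (A.mulVecLin) with hK
  have hranknull := LinearMap.finrank_range_add_finrank_ker (A.mulVecLin)
  rw [show Module.finrank ℝ (LinearMap.range A.mulVecLin) = A.rank from rfl, hrank] at hranknull
  have hsupinf := Submodule.finrank_sup_add_finrank_inf_eq (LinearMap.range L) K
  have hsup_le : Module.finrank ℝ ↥(LinearMap.range L ⊔ K) ≤ Module.finrank ℝ (Fin d → ℝ) :=
    Submodule.finrank_le _
  rw [← hK] at hranknull
  rw [hrangeL] at hsupinf
  have hpos : 0 < Module.finrank ℝ ↥(LinearMap.range L ⊓ K) := by omega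
  obtain ⟨⟨v, hv⟩, hv0⟩ := Module.finrank_pos_iff_exists_ne_zero.mp hpos
  have hvne : v ≠ 0 := fun h => hv0 (Subtype.ext h)
  obtain ⟨hvL, hvK⟩ := Submodule.mem_inf.mp hv
  obtain ⟨⟨c, t⟩, hct⟩ := hvL
  have hv_eq : v = Vhat *ᵥ c + t • z := by rw [← hct, hLapp]
  have hAv : A *ᵥ v = 0 := by
    have := (LinearMap.mem_ker).mp hvK
    rwa [Matrix.mulVecLin_apply] at this
  -- expansion of the quadratic form
  have e1 : v ⬝ᵥ Ahat *ᵥ v = c ⬝ᵥ (Matrix.diagonal dhat *ᵥ c) + t ^ 2 * R := by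
    rw [hv_eq, mulVec_add, mulVec_smul, mulVec_mulVec, heig, ← mulVec_mulVec]
    simp only [dotProduct_add, add_dotProduct, dotProduct_smul, smul_dotProduct, smul_eq_mul]
    rw [orth_dot hVhat, mulVec_dot_left Vhat, hVAz, dotProduct_zero,
      dot_mulVec_right Vhat, hz, zero_dotProduct]
    ring
  have e2 : v ⬝ᵥ v = c ⬝ᵥ c + t ^ 2 * S := by
    rw [hv_eq]
    simp only [dotProduct_add, add_dotProduct, dotProduct_smul, smul_dotProduct, smul_eq_mul]
    rw [orth_dot hVhat, mulVec_dot_left Vhat, hz, dotProduct_zero,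
      dot_mulVec_right Vhat, hz, zero_dotProduct]
    ring
  have hquad : R * (v ⬝ᵥ v) ≤ S * (v ⬝ᵥ Ahat *ᵥ v) := by
    rw [e1, e2]
    have key : ∀ j, R * (c j * c j) ≤ S * (c j * (dhat j * c j)) := by
      intro j
      nlinarith [mul_self_nonneg (c j), hdj j]
    have hsum : R * (c ⬝ᵥ c) ≤ S * (c ⬝ᵥ (Matrix.diagonal dhat *ᵥ c)) := by
      calc R * (c ⬝ᵥ c) = ∑ j, R * (c j * c j) := by rw [dotProduct, Finset.mul_sum]
      _ ≤ ∑ j, S * (c j * (dhat j * c j)) := Finset.sum_le_sum fun j _ => key j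
      _ = S * (c ⬝ᵥ (Matrix.diagonal dhat *ᵥ c)) := by
          rw [dotProduct]; simp only [mulVec_diagonal]; rw [Finset.mul_sum]
    have expand : R * (c ⬝ᵥ c + t ^ 2 * S) - S * (c ⬝ᵥ (Matrix.diagonal dhat *ᵥ c) + t ^ 2 * R)
        = R * (c ⬝ᵥ c) - S * (c ⬝ᵥ (Matrix.diagonal dhat *ᵥ c)) := by ring
    linarith [hsum, expand]
  have hhat : v ⬝ᵥ Ahat *ᵥ v ≤ ε * (v ⬝ᵥ v) := by
    have h1 : v ⬝ᵥ Ahat *ᵥ v = v ⬝ᵥ ((Ahat - A) *ᵥ v) := by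
      rw [sub_mulVec, hAv, sub_zero]
    have h2 : nE ((Ahat - A) *ᵥ v) ≤ ε * nE v := by
      rw [show Ahat - A = -(A - Ahat) from (neg_sub A Ahat).symm, neg_mulVec, nE_neg]
      exact spec_bound hclose v
    have h3 := dot_le_nE v ((Ahat - A) *ᵥ v)
    have h4 : nE v * nE ((Ahat - A) *ᵥ v) ≤ nE v * (ε * nE v) :=
      mul_le_mul_of_nonneg_left h2 (nE_nonneg v)
    have h5 : nE v * (ε * nE v) = ε * (v ⬝ᵥ v) := by rw [← nE_sq]; ring
    rw [h1]; linarith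
  have hvv : 0 < v ⬝ᵥ v := dot_self_pos hvne
  have h6 : S * (v ⬝ᵥ Ahat *ᵥ v) ≤ S * (ε * (v ⬝ᵥ v)) := mul_le_mul_of_nonneg_left hhat hs.le
  have h7 : (ε * S) * (v ⬝ᵥ v) < R * (v ⬝ᵥ v) := mul_lt_mul_of_pos_right hcon hvv
  have h8 : S * (ε * (v ⬝ᵥ v)) = (ε * S) * (v ⬝ᵥ v) := by ring
  linarith
open scoped MatrixOrder in
lemma wnorm {d : ℕ} {ε : ℝ} (hε : 0 ≤ ε) {Ahat : Matrix (Fin d) (Fin d) ℝ}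
    (hAhat : Ahat.PosSemidef) {W : Set (Fin d → ℝ)} (hWA : ∀ z ∈ W, Ahat *ᵥ z ∈ W)
    (hray : ∀ z ∈ W, z ⬝ᵥ Ahat *ᵥ z ≤ ε * (z ⬝ᵥ z))
    {z : Fin d → ℝ} (hz : z ∈ W) : nE (Ahat *ᵥ z) ≤ ε * nE z := by
  set S := CFC.sqrt Ahat with hSdef
  have hS2 : S * S = Ahat := CFC.sqrt_mul_sqrt_self Ahat hAhat.nonneg
  have hSsym : Sᵀ = S := psd_symm (CFC.sqrt_nonneg Ahat).posSemidef
  have qform : ∀ a : Fin d → ℝ, a ⬝ᵥ Ahat *ᵥ a = (S *ᵥ a) ⬝ᵥ (S *ᵥ a) := by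
    intro a
    rw [← hS2, ← mulVec_mulVec, dot_mulVec_right, hSsym]
  have hSbound : ∀ a ∈ W, nE (S *ᵥ a) ≤ Real.sqrt ε * nE a := by
    intro a ha
    rw [← sqrt_dot, ← qform]
    calc Real.sqrt (a ⬝ᵥ Ahat *ᵥ a) ≤ Real.sqrt (ε * (a ⬝ᵥ a)) := Real.sqrt_le_sqrt (hray a ha)
    _ = Real.sqrt ε * nE a := by rw [Real.sqrt_mul hε, sqrt_dot]
  have h1 : (Ahat *ᵥ z) ⬝ᵥ (Ahat *ᵥ z) = (S *ᵥ z) ⬝ᵥ (S *ᵥ (Ahat *ᵥ z)) := by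
    rw [mulVec_dot_left, psd_symm hAhat,
      show Ahat *ᵥ (Ahat *ᵥ z) = S *ᵥ (S *ᵥ (Ahat *ᵥ z)) by
        conv_rhs => rw [mulVec_mulVec, hS2],
      dot_mulVec_right, hSsym]
  have h2 : (S *ᵥ z) ⬝ᵥ (S *ᵥ (Ahat *ᵥ z)) ≤ (Real.sqrt ε * nE z) * (Real.sqrt ε * nE (Ahat *ᵥ z)) := by
    calc (S *ᵥ z) ⬝ᵥ (S *ᵥ (Ahat *ᵥ z)) ≤ nE (S *ᵥ z) * nE (S *ᵥ (Ahat *ᵥ z)) := dot_le_nE _ _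
    _ ≤ (Real.sqrt ε * nE z) * (Real.sqrt ε * nE (Ahat *ᵥ z)) :=
        mul_le_mul (hSbound z hz) (hSbound _ (hWA z hz)) (nE_nonneg _) (mul_nonneg (Real.sqrt_nonneg _) (nE_nonneg _))
  have h3 : nE (Ahat *ᵥ z) ^ 2 ≤ (ε * nE z) * nE (Ahat *ᵥ z) := by
    rw [nE_sq, h1]
    calc (S *ᵥ z) ⬝ᵥ (S *ᵥ (Ahat *ᵥ z)) ≤ (Real.sqrt ε * nE z) * (Real.sqrt ε * nE (Ahat *ᵥ z)) := h2
    _ = (ε * nE z) * nE (Ahat *ᵥ z) := by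
        rw [show (Real.sqrt ε * nE z) * (Real.sqrt ε * nE (Ahat *ᵥ z))
          = (Real.sqrt ε * Real.sqrt ε) * (nE z * nE (Ahat *ᵥ z)) by ring,
          Real.mul_self_sqrt hε]
        ring
  rcases eq_or_lt_of_le (nE_nonneg (Ahat *ᵥ z)) with h0 | h0
  · rw [← h0]; exact mul_nonneg hε (nE_nonneg z)
  · have := h3
    rw [pow_two] at this
    exact le_of_mul_le_mul_right this h0

lemma step_arith (σk ε a c b p : ℝ) (hσ : 0 < σk) (hε : 0 ≤ ε) (hεσ : ε < σk/4)
    (hc : 0 ≤ c) (hp : 0 ≤ p) (hih : σk * a ≤ (4*ε+σk*p)*c) (hwv : σk*c ≤ b) :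
    σk * (ε*a + ε*c) ≤ (4*ε + σk*(p/4))*b := by
  have e1 : 4 * ε * (ε * c) ≤ σk * (ε * c) :=
    mul_le_mul_of_nonneg_right (by linarith) (mul_nonneg hε hc)
  have e2 : ε * (σk * p * c) ≤ (σk / 4) * (σk * p * c) :=
    mul_le_mul_of_nonneg_right hεσ.le (mul_nonneg (mul_nonneg hσ.le hp) hc)
  have e3 : (4 * ε + σk * (p/4)) * (σk * c) ≤ (4 * ε + σk * (p/4)) * b :=
    mul_le_mul_of_nonneg_left hwv (by positivity)
  have e4 : 0 ≤ ε * (σk * c) := mul_nonneg hε (mul_nonneg hσ.le hc)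
  have e5 : ε * (σk * a) ≤ ε * ((4 * ε + σk * p) * c) := mul_le_mul_of_nonneg_left hih hε
  nlinarith [e1, e2, e3, e4, e5]

/-- The spectral norm of a real matrix. -/
noncomputable def spec {d : ℕ} (A : Matrix (Fin d) (Fin d) ℝ) : ℝ :=
  ‖Matrix.toEuclideanCLM (𝕜 := ℝ) A‖

/-- If `A` is PSD of rank `k` with rank-`k` eigendecomposition `V D Vᵀ` and smallest
nonzero eigenvalue `σk`, `Â` is PSD with `‖A - Â‖ ≤ ε < σk/4`, and `V̂` has orthonormal
columns spanning the top-`k` eigenspace of `Â`, then for every `u ∈ ℝ^k`,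
`√(1 - 16 ε²/σk²) ‖u‖ ≤ ‖V̂ᵀ V u‖ ≤ ‖u‖` (Euclidean norms). -/
theorem stmt9 {d k : ℕ} (ε σk : ℝ) (hε : 0 ≤ ε)
    (A Ahat : Matrix (Fin d) (Fin d) ℝ) (hA : A.PosSemidef) (hAhat : Ahat.PosSemidef)
    (hrank : A.rank = k)
    (V : Matrix (Fin d) (Fin k) ℝ) (dvec : Fin k → ℝ)
    (hV : Vᵀ * V = 1) (hAdec : A = V * Matrix.diagonal dvec * Vᵀ)
    (hσk : IsLeast (Set.range dvec) σk)
    (Vhat : Matrix (Fin d) (Fin k) ℝ) (dhat : Fin k → ℝ)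
    (hVhat : Vhatᵀ * Vhat = 1) (heig : Ahat * Vhat = Vhat * Matrix.diagonal dhat)
    (htop : ∀ x : Fin d → ℝ, Vhatᵀ.mulVec x = 0 → ∀ j, x ⬝ᵥ Ahat.mulVec x ≤ dhat j * (x ⬝ᵥ x))
    (hclose : spec (A - Ahat) ≤ ε) (hεσ : ε < σk / 4) :
    ∀ u : Fin k → ℝ,
      Real.sqrt (1 - 16 * ε ^ 2 / σk ^ 2) * Real.sqrt (u ⬝ᵥ u)
          ≤ Real.sqrt ((Vhatᵀ * V).mulVec u ⬝ᵥ (Vhatᵀ * V).mulVec u) ∧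
      Real.sqrt ((Vhatᵀ * V).mulVec u ⬝ᵥ (Vhatᵀ * V).mulVec u) ≤ Real.sqrt (u ⬝ᵥ u) := by
  intro u
  unfold spec at hclose
  have hσ : 0 < σk := by linarith
  have hdge : ∀ i, σk ≤ dvec i := fun i => hσk.2 (Set.mem_range_self i)
  have hdpos : ∀ i, 0 < dvec i := fun i => lt_of_lt_of_le hσ (hdge i)
  set P := Vhat * Vhatᵀ with hP
  have hPP : P * P = P := by
    have h : Vhatᵀ * (Vhat * Vhatᵀ) = Vhatᵀ := by
      rw [← Matrix.mul_assoc, hVhat, Matrix.one_mul]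
    rw [hP, Matrix.mul_assoc, h]
  have hPsym : Pᵀ = P := by rw [hP, transpose_mul, transpose_transpose]
  have hsymm : Ahatᵀ = Ahat := psd_symm hAhat
  have hVAhat : Vhatᵀ * Ahat = Matrix.diagonal dhat * Vhatᵀ := by
    calc Vhatᵀ * Ahat = (Ahat * Vhat)ᵀ := by rw [transpose_mul, hsymm]
    _ = (Vhat * Matrix.diagonal dhat)ᵀ := by rw [heig]
    _ = Matrix.diagonal dhat * Vhatᵀ := by rw [transpose_mul, Matrix.diagonal_transpose]
  have hcommP : Ahat * P = P * Ahat := by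
    calc Ahat * P = (Ahat * Vhat) * Vhatᵀ := by rw [hP, Matrix.mul_assoc]
    _ = Vhat * (Matrix.diagonal dhat * Vhatᵀ) := by rw [heig, Matrix.mul_assoc]
    _ = Vhat * (Vhatᵀ * Ahat) := by rw [hVAhat]
    _ = P * Ahat := by rw [hP, Matrix.mul_assoc]
  have hcomm1 : (1 - P) * Ahat = Ahat * (1 - P) := by
    rw [sub_mul, one_mul, mul_sub, mul_one, hcommP]
  set T := (1 - P) * V with hT
  set F := (1 - P) * (A - Ahat) * V with hF
  have hAV : A * V = V * Matrix.diagonal dvec := by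
    rw [hAdec, Matrix.mul_assoc (V * Matrix.diagonal dvec) Vᵀ V, hV, Matrix.mul_one]
  have hTD : T * Matrix.diagonal dvec = Ahat * T + F := by
    calc T * Matrix.diagonal dvec
        = (1 - P) * (V * Matrix.diagonal dvec) := by rw [hT, Matrix.mul_assoc]
    _ = (1 - P) * ((A - Ahat) * V + Ahat * V) := by
        congr 1
        rw [Matrix.sub_mul, hAV]
        abel
    _ = (1 - P) * ((A - Ahat) * V) + (1 - P) * (Ahat * V) := by rw [Matrix.mul_add]
    _ = F + Ahat * T := by
        rw [← Matrix.mul_assoc, ← Matrix.mul_assoc, hcomm1, Matrix.mul_assoc Ahat, ← hT, ← hF]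
    _ = Ahat * T + F := add_comm _ _
  have hVT : Vhatᵀ * T = 0 := by
    have h : Vhatᵀ * (1 - P) = 0 := by
      rw [Matrix.mul_sub, Matrix.mul_one, hP, ← Matrix.mul_assoc, hVhat, Matrix.one_mul, sub_self]
    rw [hT, ← Matrix.mul_assoc, h, Matrix.zero_mul]
  have hWmem : ∀ x : Fin k → ℝ, Vhatᵀ *ᵥ (T *ᵥ x) = 0 := by
    intro x; rw [mulVec_mulVec, hVT, zero_mulVec]
  have hWA : ∀ z : Fin d → ℝ, Vhatᵀ *ᵥ z = 0 → Vhatᵀ *ᵥ (Ahat *ᵥ z) = 0 := by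
    intro z hz
    rw [mulVec_mulVec, hVAhat, ← mulVec_mulVec, hz, mulVec_zero]
  have hray : ∀ z, Vhatᵀ *ᵥ z = 0 → z ⬝ᵥ Ahat *ᵥ z ≤ ε * (z ⬝ᵥ z) :=
    fun z hz => rayleigh hAhat hrank hVhat heig htop hclose z hz
  have hwn : ∀ z : Fin d → ℝ, Vhatᵀ *ᵥ z = 0 → nE (Ahat *ᵥ z) ≤ ε * nE z := by
    intro z hz
    exact wnorm hε hAhat (W := {x | Vhatᵀ *ᵥ x = 0}) (fun a ha => hWA a ha)
      (fun a ha => hray a ha) hz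
  have hidem : (1 - P) * (1 - P) = 1 - P := by
    rw [mul_sub, mul_one, sub_mul, one_mul, hPP]; abel
  have hprojd : ∀ w : Fin d → ℝ, ((1 - P) *ᵥ w) ⬝ᵥ ((1 - P) *ᵥ w)
      = w ⬝ᵥ w - (Vhatᵀ *ᵥ w) ⬝ᵥ (Vhatᵀ *ᵥ w) := by
    intro w
    have h1 : (1 - P)ᵀ = 1 - P := by rw [transpose_sub, transpose_one, hPsym]
    rw [mulVec_dot_left, h1, mulVec_mulVec, hidem, sub_mulVec, dotProduct_sub, one_mulVec]
    have h2 : w ⬝ᵥ (P *ᵥ w) = (Vhatᵀ *ᵥ w) ⬝ᵥ (Vhatᵀ *ᵥ w) := by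
      rw [hP, ← mulVec_mulVec, dot_mulVec_right]
    rw [h2]
  have hproj : ∀ w : Fin d → ℝ, nE ((1 - P) *ᵥ w) ≤ nE w := by
    intro w
    apply nE_le_of_dot
    rw [hprojd w]
    have := dot_self_nonneg' (Vhatᵀ *ᵥ w)
    linarith
  have horth : ∀ x : Fin k → ℝ, nE (V *ᵥ x) = nE x := by
    intro x; rw [← sqrt_dot, ← sqrt_dot, orth_dot hV]
  have hFv : ∀ v : Fin k → ℝ, nE (F *ᵥ v) ≤ ε * nE v := by
    intro v
    rw [hF, ← mulVec_mulVec, ← mulVec_mulVec]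
    calc nE ((1 - P) *ᵥ ((A - Ahat) *ᵥ (V *ᵥ v))) ≤ nE ((A - Ahat) *ᵥ (V *ᵥ v)) := hproj _
    _ ≤ ε * nE (V *ᵥ v) := spec_bound hclose _
    _ = ε * nE v := by rw [horth]
  have hrec : ∀ v : Fin k → ℝ,
      nE (T *ᵥ (Matrix.diagonal dvec *ᵥ v)) ≤ ε * nE (T *ᵥ v) + ε * nE v := by
    intro v
    rw [mulVec_mulVec, hTD, add_mulVec, ← mulVec_mulVec]
    calc nE (Ahat *ᵥ (T *ᵥ v) + F *ᵥ v) ≤ nE (Ahat *ᵥ (T *ᵥ v)) + nE (F *ᵥ v) := nE_add_le _ _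
    _ ≤ ε * nE (T *ᵥ v) + ε * nE v := add_le_add (hwn _ (hWmem v)) (hFv v)
  have hTbase : ∀ v : Fin k → ℝ, nE (T *ᵥ v) ≤ nE v := by
    intro v
    rw [hT, ← mulVec_mulVec]
    exact (hproj _).trans_eq (horth v)
  have hMTmat : Tᵀ * T = 1 - (Vhatᵀ * V)ᵀ * (Vhatᵀ * V) := by
    have h1 : Tᵀ = Vᵀ * (1 - P) := by
      rw [hT, transpose_mul, transpose_sub, transpose_one, hPsym]
    calc Tᵀ * T = Vᵀ * ((1 - P) * ((1 - P) * V)) := by rw [h1, hT, Matrix.mul_assoc]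
    _ = Vᵀ * ((1 - P) * V) := by rw [← Matrix.mul_assoc (1-P), hidem]
    _ = Vᵀ * V - Vᵀ * (P * V) := by rw [Matrix.sub_mul, Matrix.one_mul, Matrix.mul_sub]
    _ = 1 - (Vhatᵀ * V)ᵀ * (Vhatᵀ * V) := by
        rw [hV, hP, transpose_mul, transpose_transpose, Matrix.mul_assoc Vhat,
          ← Matrix.mul_assoc Vᵀ]
  clear_value T F P
  have hind : ∀ n : ℕ, ∀ v : Fin k → ℝ,
      σk * nE (T *ᵥ v) ≤ (4 * ε + σk * (1 / 4) ^ n) * nE v := by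
    intro n
    induction n with
    | zero =>
      intro v
      have h1 := hTbase v
      have h2 : 0 ≤ nE v := nE_nonneg v
      have h3 : 0 ≤ ε * nE v := mul_nonneg hε h2
      rw [pow_zero]
      nlinarith
    | succ n ih =>
      intro v
      set w : Fin k → ℝ := fun j => v j / dvec j with hw
      have hDw : Matrix.diagonal dvec *ᵥ w = v := by
        ext i
        rw [mulVec_diagonal]
        show dvec i * (v i / dvec i) = v i
        have hne : dvec i ≠ 0 := (hdpos i).ne'
        field_simp
      have hwv : σk * nE w ≤ nE v := by
        have hsq : (σk * nE w) ^ 2 ≤ nE v ^ 2 := by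
          rw [mul_pow, nE_sq, nE_sq, dotProduct, dotProduct, Finset.mul_sum]
          refine Finset.sum_le_sum fun i _ => ?_
          have h1 : σk ≤ dvec i := hdge i
          have h2 : σk * σk ≤ dvec i * dvec i :=
            mul_le_mul h1 h1 hσ.le (le_trans hσ.le h1)
          have h3 : w i = v i / dvec i := rfl
          rw [h3, div_mul_div_comm, ← mul_div_assoc,
            div_le_iff₀ (mul_pos (hdpos i) (hdpos i))]
          nlinarith [mul_self_nonneg (v i)]
        exact le_of_pow_le_pow_left₀ two_ne_zero (nE_nonneg v) hsq
      clear_value w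
      calc σk * nE (T *ᵥ v) = σk * nE (T *ᵥ (Matrix.diagonal dvec *ᵥ w)) := by rw [hDw]
      _ ≤ σk * (ε * nE (T *ᵥ w) + ε * nE w) :=
          mul_le_mul_of_nonneg_left (hrec w) hσ.le
      _ ≤ (4 * ε + σk * (1 / 4) ^ (n + 1)) * nE v := by
          have hpow : ((1:ℝ)/4) ^ (n+1) = ((1/4 : ℝ)^n)/4 := by rw [pow_succ]; ring
          rw [hpow]
          exact step_arith σk ε (nE (T *ᵥ w)) (nE w) (nE v) ((1/4 : ℝ)^n) hσ hε hεσ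
            (nE_nonneg w) (by positivity) (ih w) hwv
  have hlim : ∀ v : Fin k → ℝ, σk * nE (T *ᵥ v) ≤ 4 * ε * nE v := by
    intro v
    have htend : Filter.Tendsto (fun n : ℕ => (4 * ε + σk * (1 / 4) ^ n) * nE v)
        Filter.atTop (nhds ((4 * ε + σk * 0) * nE v)) := by
      exact ((tendsto_const_nhds.add ((tendsto_pow_atTop_nhds_zero_of_lt_one (by norm_num)
        (by norm_num)).const_mul σk)).mul_const _)
    have h := ge_of_tendsto htend (Filter.Eventually.of_forall fun n => hind n v)
    simpa using h
  -- assembly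
  have hdot : (T *ᵥ u) ⬝ᵥ (T *ᵥ u)
      = u ⬝ᵥ u - ((Vhatᵀ * V) *ᵥ u) ⬝ᵥ ((Vhatᵀ * V) *ᵥ u) := by
    rw [mulVec_dot_left, mulVec_mulVec, hMTmat, sub_mulVec, dotProduct_sub, one_mulVec]
    congr 1
    rw [← mulVec_mulVec, dot_mulVec_right, transpose_transpose]
  have hub : ((Vhatᵀ * V) *ᵥ u) ⬝ᵥ ((Vhatᵀ * V) *ᵥ u) ≤ u ⬝ᵥ u := by
    have := dot_self_nonneg' (T *ᵥ u)
    linarith [hdot]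
  have hT2 : σk ^ 2 * ((T *ᵥ u) ⬝ᵥ (T *ᵥ u)) ≤ 16 * ε ^ 2 * (u ⬝ᵥ u) := by
    have h := hlim u
    have h2 : (σk * nE (T *ᵥ u)) ^ 2 ≤ (4 * ε * nE u) ^ 2 :=
      pow_le_pow_left₀ (mul_nonneg hσ.le (nE_nonneg _)) h 2
    rw [mul_pow, mul_pow, nE_sq, nE_sq] at h2
    have h3 : (4*ε)^2 * (u ⬝ᵥ u) = 16*ε^2*(u ⬝ᵥ u) := by ring
    linarith [h2, h3]
  have hTle : (T *ᵥ u) ⬝ᵥ (T *ᵥ u) ≤ 16 * ε ^ 2 / σk ^ 2 * (u ⬝ᵥ u) := by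
    rw [div_mul_eq_mul_div, le_div_iff₀ (by positivity : (0:ℝ) < σk ^ 2)]
    have h3 : (T *ᵥ u) ⬝ᵥ (T *ᵥ u) * σk ^ 2 = σk ^ 2 * ((T *ᵥ u) ⬝ᵥ (T *ᵥ u)) := by ring
    linarith [hT2, h3]
  have hlow : (1 - 16 * ε ^ 2 / σk ^ 2) * (u ⬝ᵥ u)
      ≤ ((Vhatᵀ * V) *ᵥ u) ⬝ᵥ ((Vhatᵀ * V) *ᵥ u) := by
    have hu : u ⬝ᵥ u = ((Vhatᵀ * V) *ᵥ u) ⬝ᵥ ((Vhatᵀ * V) *ᵥ u) + (T *ᵥ u) ⬝ᵥ (T *ᵥ u) := by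
      linarith [hdot]
    have h3 : (1 - 16 * ε ^ 2 / σk ^ 2) * (u ⬝ᵥ u)
        = u ⬝ᵥ u - 16 * ε ^ 2 / σk ^ 2 * (u ⬝ᵥ u) := by ring
    linarith [hTle, hu, h3]
  have h1c : 0 ≤ 1 - 16 * ε ^ 2 / σk ^ 2 := by
    rw [sub_nonneg, div_le_one (by positivity : (0:ℝ) < σk ^ 2)]
    have h4 : (4*ε)^2 ≤ σk^2 := pow_le_pow_left₀ (by linarith) (by linarith) 2
    have h5 : (4*ε)^2 = 16*ε^2 := by ring
    linarith [h4, h5]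
  constructor
  · calc Real.sqrt (1 - 16 * ε ^ 2 / σk ^ 2) * Real.sqrt (u ⬝ᵥ u)
        = Real.sqrt ((1 - 16 * ε ^ 2 / σk ^ 2) * (u ⬝ᵥ u)) := (Real.sqrt_mul h1c _).symm
    _ ≤ Real.sqrt (((Vhatᵀ * V) *ᵥ u) ⬝ᵥ ((Vhatᵀ * V) *ᵥ u)) := Real.sqrt_le_sqrt hlow
  · exact Real.sqrt_le_sqrt hub
end
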